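/- arXiv:2010.09884 — 3 statements merged into one kernel-verified Lean document; each statement's English description precedes it below -/
import Mathlib

section
/- Let α be a linear order, let m ≥ 1, and let A : Fin m → Fin 5 → α describe m groups of 5 elements each (so n = 5m elements in total, counted with multiplicity by their positions). For each i, let med i : α satisfy: at least 3 indices j ∈ Fin 5 have A i j ≤ med i, and at least 3 indices j have med i ≤ A i j. Let p : α satisfy: at least ⌈m/2⌉ indices i have med i ≤ p, and at least ⌈m/2⌉ indices i have p ≤ med i. Then the number of pairs (i, j) with A i j ≤ p is at least 3 · (⌈n/10⌉ − 1), and the number of pairs (i, j) with p ≤ A i j is at least 3 · (⌈n/10⌉ − 1). -/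
set_option maxRecDepth 4000

lemma aux_pair_count {m : ℕ} (Q : Fin m × Fin 5 → Prop) [DecidablePred Q]
    (S : Finset (Fin m))
    (h : ∀ i ∈ S, 3 ≤ (Finset.univ.filter (fun j : Fin 5 => Q (i, j))).card) :
    3 * S.card ≤ (Finset.univ.filter Q).card := by
  have hcard : (Finset.univ.filter Q).card
      = ∑ i : Fin m, (Finset.univ.filter (fun j : Fin 5 => Q (i, j))).card := by
    rw [Finset.card_filter, Fintype.sum_prod_type]
    exact Finset.sum_congr rfl fun i _ => (Finset.card_filter _ _).symm
  rw [hcard]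
  calc 3 * S.card = ∑ _i ∈ S, 3 := by simp [mul_comm]
    _ ≤ ∑ i ∈ S, (Finset.univ.filter (fun j : Fin 5 => Q (i, j))).card :=
        Finset.sum_le_sum h
    _ ≤ ∑ i : Fin m, (Finset.univ.filter (fun j : Fin 5 => Q (i, j))).card :=
        Finset.sum_le_sum_of_subset (Finset.subset_univ S)

/-- Correctness of the median-of-medians pivot: given `m ≥ 1` groups of 5
elements, medians `med i` of each group, and a median `p` of the medians, at
least `3·(⌈n/10⌉ − 1)` of the `n = 5m` elements are `≤ p` and at least
`3·(⌈n/10⌉ − 1)` of them are `≥ p`. -/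
theorem median_of_medians_pivot
    {α : Type*} [LinearOrder α]
    (m : ℕ) (hm : 1 ≤ m) (n : ℕ) (hn : n = 5 * m)
    (A : Fin m → Fin 5 → α) (med : Fin m → α)
    (hmed_le : ∀ i, 3 ≤ (Finset.univ.filter (fun j : Fin 5 => A i j ≤ med i)).card)
    (hmed_ge : ∀ i, 3 ≤ (Finset.univ.filter (fun j : Fin 5 => med i ≤ A i j)).card)
    (p : α)
    (hp_le : ⌈(m : ℚ) / 2⌉₊ ≤ (Finset.univ.filter (fun i : Fin m => med i ≤ p)).card)
    (hp_ge : ⌈(m : ℚ) / 2⌉₊ ≤ (Finset.univ.filter (fun i : Fin m => p ≤ med i)).card) :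
    3 * (⌈(n : ℚ) / 10⌉₊ - 1) ≤
        (Finset.univ.filter (fun ij : Fin m × Fin 5 => A ij.1 ij.2 ≤ p)).card ∧
      3 * (⌈(n : ℚ) / 10⌉₊ - 1) ≤
        (Finset.univ.filter (fun ij : Fin m × Fin 5 => p ≤ A ij.1 ij.2)).card := by
  have hceil : ⌈(n : ℚ) / 10⌉₊ = ⌈(m : ℚ) / 2⌉₊ := by
    subst hn
    congr 1
    push_cast
    ring
  have key : ∀ (c : ℕ), ⌈(m : ℚ) / 2⌉₊ ≤ c →
      3 * (⌈(n : ℚ) / 10⌉₊ - 1) ≤ 3 * c := by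
    intro c hc
    rw [hceil]
    exact Nat.mul_le_mul_left 3 (le_trans (Nat.sub_le _ _) hc)
  constructor
  · refine le_trans (key _ hp_le) (aux_pair_count _ _ ?_)
    intro i hi
    simp only [Finset.mem_filter] at hi
    refine le_trans (hmed_le i) (Finset.card_le_card ?_)
    intro j hj
    simp only [Finset.mem_filter, Finset.mem_univ, true_and] at hj ⊢
    exact le_trans hj hi.2
  · refine le_trans (key _ hp_ge) (aux_pair_count _ _ ?_)
    intro i hi
    simp only [Finset.mem_filter] at hi
    refine le_trans (hmed_ge i) (Finset.card_le_card ?_)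
    intro j hj
    simp only [Finset.mem_filter, Finset.mem_univ, true_and] at hj ⊢
    exact le_trans hi.2 hj
end

section
/- There exists an absolute constant C > 0 with the following property. Let a > 0 be a real number and let T : ℕ → ℕ → ℝ satisfy: (i) T(1, K) ≤ a for all K; (ii) T(n, K) ≤ a·n for all n ≥ 1 and all K ≤ 2; (iii) for all n ≥ 2 and K ≥ 3, T(n, K) ≤ T(⌈n/2⌉, min(K, ⌈n/2⌉)) + T(⌈n/2⌉, min(⌈K/2⌉, ⌈n/2⌉)) + a·n. Then for all n ≥ 1 and all K with 2 ≤ K ≤ n, T(n, K) ≤ C · a · n · (1 + log₂ K), where log₂ denotes the real base-2 logarithm. -/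
private lemma two_ceil_half (n : ℕ) :
    n ≤ 2 * ⌈(n : ℚ) / 2⌉₊ ∧ 2 * ⌈(n : ℚ) / 2⌉₊ ≤ n + 1 := by
  constructor
  · have h := Nat.le_ceil ((n : ℚ) / 2)
    have h2 : (n : ℚ) ≤ 2 * (⌈(n : ℚ) / 2⌉₊ : ℚ) := by linarith
    exact_mod_cast h2
  · have h := Nat.ceil_lt_add_one (by positivity : (0:ℚ) ≤ (n : ℚ) / 2)
    have h2 : (2 * ⌈(n : ℚ) / 2⌉₊ : ℚ) < (n : ℚ) + 2 := by push_cast; linarith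
    have h3 : 2 * ⌈(n : ℚ) / 2⌉₊ < n + 2 := by exact_mod_cast h2
    omega

private lemma logb_le_div_eight {x : ℝ} (hx : 576 ≤ x) : Real.logb 2 x ≤ x / 8 := by
  have hx0 : (0:ℝ) < x := by linarith
  have hs0 : 0 ≤ Real.sqrt x := Real.sqrt_nonneg x
  have hss : Real.sqrt x * Real.sqrt x = x := Real.mul_self_sqrt hx0.le
  have h24 : (24:ℝ) ≤ Real.sqrt x := by
    rw [Real.le_sqrt (by norm_num) (by linarith)]
    nlinarith
  have hlog : Real.log x ≤ 2 * Real.sqrt x := by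
    have h1 := Real.log_sqrt hx0.le
    have h2 := Real.log_le_sub_one_of_pos (Real.sqrt_pos.mpr hx0)
    linarith
  have hl2 : (0.6931:ℝ) < Real.log 2 := by
    have := Real.log_two_gt_d9; linarith
  rw [Real.logb, div_le_iff₀ (by linarith : (0:ℝ) < Real.log 2)]
  nlinarith [mul_nonneg (mul_nonneg hs0 (by linarith : (0:ℝ) ≤ Real.sqrt x - 24))
      (by linarith : (0:ℝ) ≤ Real.log 2),
    mul_nonneg (mul_nonneg hs0 hs0) (by linarith : (0:ℝ) ≤ Real.log 2 - 0.6931)]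

private lemma logb_sqrt_two : Real.logb 2 (Real.sqrt 2) = 1 / 2 := by
  rw [show Real.sqrt 2 = (2:ℝ) ^ ((1:ℝ)/2) from Real.sqrt_eq_rpow 2]
  exact Real.logb_rpow (by norm_num) (by norm_num)

set_option maxHeartbeats 1000000 in
/-- The sorting recurrence `T(n,K) ≤ T(⌈n/2⌉, min(K,⌈n/2⌉)) + T(⌈n/2⌉, min(⌈K/2⌉,⌈n/2⌉)) + a·n`
with base cases `T(1,K) ≤ a` and `T(n,K) ≤ a·n` for `K ≤ 2` solves to
`T(n,K) = O(a · n · log K)`. -/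
theorem sorting_recurrence :
    ∃ C : ℝ, 0 < C ∧
      ∀ (a : ℝ) (T : ℕ → ℕ → ℝ), 0 < a →
        (∀ K, T 1 K ≤ a) →
        (∀ n ≥ 1, ∀ K ≤ 2, T n K ≤ a * n) →
        (∀ n, 2 ≤ n → ∀ K, 3 ≤ K →
          T n K ≤ T ⌈(n : ℚ) / 2⌉₊ (min K ⌈(n : ℚ) / 2⌉₊)
                  + T ⌈(n : ℚ) / 2⌉₊ (min ⌈(K : ℚ) / 2⌉₊ ⌈(n : ℚ) / 2⌉₊)
                  + a * n) →
        ∀ n ≥ 1, ∀ K, 2 ≤ K → K ≤ n →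
          T n K ≤ C * a * n * (1 + Real.logb 2 K) := by
  refine ⟨1725, by norm_num, ?_⟩
  intro a T ha hbase1 hbase2 hrec
  -- Step 1: a crude bound T n K ≤ a * (3n² - 2n), for all n ≥ 1 and all K.
  have crude : ∀ n, 1 ≤ n → ∀ K, T n K ≤ a * (3 * (n:ℝ)^2 - 2 * n) := by
    intro n
    induction n using Nat.strong_induction_on with
    | _ n IH =>
      intro hn K
      by_cases hK2 : K ≤ 2
      · have h := hbase2 n hn K hK2
        have h1n : (1:ℝ) ≤ (n:ℝ) := by exact_mod_cast hn
        nlinarith [mul_nonneg ha.le (by nlinarith : (0:ℝ) ≤ 3*(n:ℝ)^2 - 3*n)]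
      · push_neg at hK2
        by_cases hn1 : n = 1
        · subst hn1
          have h := hbase1 K
          norm_num
          linarith
        · have hn2 : 2 ≤ n := by omega
          obtain ⟨hm1, hm2⟩ := two_ceil_half n
          set m := ⌈(n : ℚ) / 2⌉₊ with hmdef
          have hmlt : m < n := by omega
          have hm1' : 1 ≤ m := by omega
          have hrecn := hrec n hn2 K hK2
          have hA := IH m hmlt hm1' (min K m)
          have hB := IH m hmlt hm1' (min ⌈(K : ℚ) / 2⌉₊ m)
          have hpar : 2 * m = n ∨ (2 * m = n + 1 ∧ 3 ≤ n) := by omega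
          have key : 2 * (3 * (m:ℝ)^2 - 2 * m) + n ≤ 3 * (n:ℝ)^2 - 2 * n := by
            rcases hpar with h | ⟨h, h3⟩
            · have hc : (n:ℝ) = 2 * m := by exact_mod_cast h.symm
              have hc4 : (1:ℝ) ≤ m := by exact_mod_cast hm1'
              nlinarith
            · have hc : (n:ℝ) = 2 * m - 1 := by
                have h' : (n:ℝ) + 1 = 2 * (m:ℝ) := by exact_mod_cast h.symm
                linarith
              have hm2' : 2 ≤ m := by omega
              have hc4 : (2:ℝ) ≤ m := by exact_mod_cast hm2'
              nlinarith [sq_nonneg ((m:ℝ) - 2)]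
          linarith [mul_le_mul_of_nonneg_left key ha.le]
  -- Step 2: the main bound T n K ≤ a * (1725 n + 32 n log₂ K) for 2 ≤ K ≤ n.
  have main : ∀ n, 1 ≤ n → ∀ K, 2 ≤ K → K ≤ n →
      T n K ≤ a * (1725 * (n:ℝ) + 32 * (n:ℝ) * Real.logb 2 K) := by
    intro n
    induction n using Nat.strong_induction_on with
    | _ n IH =>
      intro hn K hK2 hKn
      have hK0 : (0:ℝ) < (K:ℝ) := by exact_mod_cast (show 0 < K by omega)
      have hL1 : (1:ℝ) ≤ Real.logb 2 K := by
        have h := Real.logb_le_logb_of_le one_lt_two (by norm_num : (0:ℝ) < 2)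
          (by exact_mod_cast hK2 : (2:ℝ) ≤ (K:ℝ))
        rwa [Real.logb_self_eq_one one_lt_two] at h
      have hL0 : (0:ℝ) ≤ Real.logb 2 K := by linarith
      have hn0 : (0:ℝ) ≤ (n:ℝ) := Nat.cast_nonneg n
      by_cases hsm : n ≤ 575
      · have h := crude n hn K
        have h1n : (1:ℝ) ≤ (n:ℝ) := by exact_mod_cast hn
        have h575 : (n:ℝ) ≤ 575 := by exact_mod_cast hsm
        have hc : (3 * (n:ℝ)^2 - 2 * n) ≤ 1725 * (n:ℝ) := by nlinarith
        have h3 : 0 ≤ a * (32 * (n:ℝ) * Real.logb 2 K) :=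
          mul_nonneg ha.le (mul_nonneg (mul_nonneg (by norm_num) hn0) hL0)
        have := mul_le_mul_of_nonneg_left hc ha.le
        linarith
      · push_neg at hsm
        by_cases hK2' : K ≤ 2
        · have h := hbase2 n hn K hK2'
          nlinarith [mul_nonneg (mul_nonneg (mul_nonneg ha.le (by norm_num : (0:ℝ) ≤ 32)) hn0) hL0,
            mul_nonneg ha.le hn0]
        · push_neg at hK2'
          obtain ⟨hm1, hm2⟩ := two_ceil_half n
          obtain ⟨hk1, hk2⟩ := two_ceil_half K
          set m := ⌈(n : ℚ) / 2⌉₊ with hmdef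
          set q := ⌈(K : ℚ) / 2⌉₊ with hqdef
          have hmlt : m < n := by omega
          have hm2' : 2 ≤ m := by omega
          have hK1a : 2 ≤ min K m := by omega
          have hK1b : min K m ≤ m := min_le_right _ _
          have hK2a : 2 ≤ min q m := by omega
          have hK2b : min q m ≤ m := min_le_right _ _
          have hA := IH m hmlt (by omega) (min K m) hK1a hK1b
          have hB := IH m hmlt (by omega) (min q m) hK2a hK2b
          have hrecn := hrec n (by omega) K hK2'
          set L := Real.logb 2 (K:ℝ) with hLdef
          set L1 := Real.logb 2 ((min K m : ℕ) : ℝ) with hL1def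
          set L2 := Real.logb 2 ((min q m : ℕ) : ℝ) with hL2def
          have hmin1pos : (0:ℝ) < ((min K m : ℕ) : ℝ) := by
            exact_mod_cast (show 0 < min K m by omega)
          have hmin2pos : (0:ℝ) < ((min q m : ℕ) : ℝ) := by
            exact_mod_cast (show 0 < min q m by omega)
          have hLL1 : L1 ≤ L := Real.logb_le_logb_of_le one_lt_two hmin1pos
            (by exact_mod_cast (show min K m ≤ K from min_le_left _ _))
          have hLL2 : L2 ≤ L - 1/2 := by
            have hs0 : (0:ℝ) ≤ Real.sqrt 2 := Real.sqrt_nonneg 2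
            have hs2 : Real.sqrt 2 < 1.415 := (Real.sqrt_lt' (by norm_num)).mpr (by norm_num)
            have hK3 : (3:ℝ) ≤ (K:ℝ) := by exact_mod_cast hK2'
            have h2q : ((min q m : ℕ) : ℝ) * 2 ≤ (K:ℝ) + 1 := by
              exact_mod_cast (show (min q m) * 2 ≤ K + 1 by omega)
            have hle : ((min q m : ℕ) : ℝ) * Real.sqrt 2 ≤ (K:ℝ) := by
              nlinarith [mul_nonneg hmin2pos.le (by linarith : (0:ℝ) ≤ 1.415 - Real.sqrt 2)]
            have hmul : Real.logb 2 (((min q m : ℕ) : ℝ) * Real.sqrt 2) = L2 + 1/2 := by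
              rw [Real.logb_mul (by linarith) (by positivity), logb_sqrt_two]
            have hmono : Real.logb 2 (((min q m : ℕ) : ℝ) * Real.sqrt 2) ≤ L :=
              Real.logb_le_logb_of_le one_lt_two (by positivity) hle
            rw [hmul] at hmono; linarith
          have hLn : L ≤ (n:ℝ) / 8 := by
            have h1 : L ≤ Real.logb 2 (n:ℝ) := Real.logb_le_logb_of_le one_lt_two hK0
              (by exact_mod_cast hKn)
            have h2 : Real.logb 2 (n:ℝ) ≤ (n:ℝ) / 8 :=
              logb_le_div_eight (by exact_mod_cast (show 576 ≤ n by omega))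
            linarith
          have hL1nn : 0 ≤ L1 := Real.logb_nonneg one_lt_two
            (by exact_mod_cast (show 1 ≤ min K m by omega))
          have hL2nn : 0 ≤ L2 := Real.logb_nonneg one_lt_two
            (by exact_mod_cast (show 1 ≤ min q m by omega))
          have c1 : (n:ℝ) ≤ 2 * (m:ℝ) := by exact_mod_cast hm1
          have c2 : 2 * (m:ℝ) ≤ (n:ℝ) + 1 := by exact_mod_cast hm2
          have c3 : (576:ℝ) ≤ (n:ℝ) := by exact_mod_cast (show 576 ≤ n by omega)
          have c4 : (0:ℝ) ≤ (m:ℝ) := Nat.cast_nonneg m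
          have key : 1725 * (m:ℝ) + 32 * (m:ℝ) * L1 + (1725 * (m:ℝ) + 32 * (m:ℝ) * L2)
              + (n:ℝ) ≤ 1725 * (n:ℝ) + 32 * (n:ℝ) * L := by
            nlinarith [mul_nonneg c4 (by linarith : (0:ℝ) ≤ L - L1),
              mul_nonneg c4 (by linarith : (0:ℝ) ≤ L - 1/2 - L2),
              mul_nonneg (by linarith : (0:ℝ) ≤ (n:ℝ) + 1 - 2 * m)
                (by linarith : (0:ℝ) ≤ 2 * L - 1/2)]
          linarith [mul_le_mul_of_nonneg_left key ha.le]
  -- Conclusion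
  intro n hn K hK2 hKn
  have h := main n hn K hK2 hKn
  have hL0 : (0:ℝ) ≤ Real.logb 2 K :=
    Real.logb_nonneg one_lt_two (by exact_mod_cast (show 1 ≤ K by omega))
  have hn0 : (0:ℝ) ≤ (n:ℝ) := Nat.cast_nonneg n
  nlinarith [mul_nonneg (mul_nonneg ha.le hn0) hL0]
end

section
/- Let k, n, t be natural numbers with 2^k dividing n and 2^k ≥ 1. Let S be a finite subset of Fin n, and let Bad : Fin n → Finset (Fin 2^k) be such that (Bad v).card ≤ t for every v ∈ S. Then there exists a function φ : Fin n → Fin 2^k such that every fiber has cardinality exactly n/2^k (i.e. for every key j, the number of v with φ v = j equals n/2^k), and moreover 2^k · (number of v ∈ S with φ v ∈ Bad v) ≤ t · (card of S). -/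
open Finset

/-- The fibers of `v ↦ v % q` on `Fin (q*m)` each have size `m`. -/
lemma base_fiber_card (q m : ℕ) (hq : 0 < q) (jv : ℕ) (hj : jv < q) :
    ((Finset.univ : Finset (Fin (q * m))).filter
      (fun v : Fin (q*m) => (v : ℕ) % q = jv)).card = m := by
  conv_rhs => rw [← Finset.card_fin m]
  refine Finset.card_bij' (fun v _ => (⟨(v : ℕ) / q, by
      exact Nat.div_lt_of_lt_mul v.isLt⟩ : Fin m))
    (fun i _ => (⟨jv + q * (i : ℕ), by
      have h1 : jv + q * (i : ℕ) < q * ((i : ℕ) + 1) := by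
        rw [Nat.mul_add, Nat.mul_one, Nat.add_comm]; omega
      exact h1.trans_le (Nat.mul_le_mul_left q i.isLt)⟩ : Fin (q * m)))
    ?_ ?_ ?_ ?_
  · intro v hv
    exact Finset.mem_univ _
  · intro i _
    simp only [Finset.mem_filter, Finset.mem_univ, true_and]
    rw [Nat.add_mul_mod_self_left, Nat.mod_eq_of_lt hj]
  · intro v hv
    simp only [Finset.mem_filter, Finset.mem_univ, true_and] at hv
    apply Fin.ext
    simp only
    conv_rhs => rw [← Nat.mod_add_div (v : ℕ) q, hv]
  · intro i _
    apply Fin.ext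
    simp only
    rw [Nat.add_mul_div_left _ _ hq, Nat.div_eq_of_lt hj, Nat.zero_add]

/-- Combinatorial core of Claim 8.2: if for each node `v` in `S` the set
`Bad v` of bad keys has size at most `t`, then there is a balanced key
assignment `φ` (every key appears exactly `n/2^k` times) under which at most a
`t/2^k` fraction of the nodes in `S` receive a bad key. -/
theorem balanced_key_assignment_exists
    (k n t : ℕ) (hdvd : 2 ^ k ∣ n) (hk : 1 ≤ 2 ^ k)
    (S : Finset (Fin n)) (Bad : Fin n → Finset (Fin (2 ^ k)))
    (hBad : ∀ v ∈ S, (Bad v).card ≤ t) :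
    ∃ φ : Fin n → Fin (2 ^ k),
      (∀ j : Fin (2 ^ k),
        (Finset.univ.filter (fun v => φ v = j)).card = n / 2 ^ k) ∧
      2 ^ k * (S.filter (fun v => φ v ∈ Bad v)).card ≤ t * S.card := by
  have hq : 0 < 2 ^ k := hk
  obtain ⟨m, hm⟩ := hdvd
  have hmn : n / 2 ^ k = m := by rw [hm, Nat.mul_div_cancel_left _ hq]
  -- base assignment and its shifts
  let base : Fin n → Fin (2 ^ k) := fun v => ⟨(v : ℕ) % 2 ^ k, Nat.mod_lt _ hq⟩
  let φc : Fin (2 ^ k) → Fin n → Fin (2 ^ k) := fun c v => base v + c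
  -- every shift is balanced
  have hbal : ∀ c : Fin (2 ^ k), ∀ j : Fin (2 ^ k),
      (Finset.univ.filter (fun v => φc c v = j)).card = m := by
    intro c j
    have hiff : ∀ v : Fin n, φc c v = j ↔ base v = j - c := by
      intro v; constructor
      · intro h; rw [← h]; simp [φc]
      · intro h; simp [φc, h]
    have : (Finset.univ.filter (fun v => φc c v = j))
        = Finset.univ.filter (fun v : Fin n => (v : ℕ) % 2 ^ k = ((j - c : Fin (2 ^ k)) : ℕ)) := by
      apply Finset.filter_congr
      intro v _
      rw [hiff v]
      simp only [base, Fin.ext_iff]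
    rw [this]
    have := base_fiber_card (2 ^ k) m hq ((j - c : Fin (2 ^ k)) : ℕ) (j - c).isLt
    have hcast : ∀ (P : Fin n → Prop) [DecidablePred P],
        (Finset.univ.filter P).card
          = ((Finset.univ : Finset (Fin (2 ^ k * m))).filter
              (fun v => P (Fin.cast hm.symm v))).card := by
      intro P _
      apply Finset.card_nbij' (fun v => Fin.cast hm v) (fun v => Fin.cast hm.symm v)
      · intro v hv; simpa [Fin.ext_iff] using hv
      · intro v hv; simpa [Fin.ext_iff] using hv
      · intro v _; simp [Fin.ext_iff]
      · intro v _; simp [Fin.ext_iff]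
    rw [hcast]
    simpa using base_fiber_card (2 ^ k) m hq ((j - c : Fin (2 ^ k)) : ℕ) (j - c).isLt
  -- averaging over shifts
  let f : Fin (2 ^ k) → ℕ := fun c => (S.filter (fun v => φc c v ∈ Bad v)).card
  have hsum : ∑ c : Fin (2 ^ k), f c ≤ t * S.card := by
    have h1 : ∑ c : Fin (2 ^ k), f c = ∑ v ∈ S, (Bad v).card := by
      simp only [f, Finset.card_filter]
      rw [Finset.sum_comm]
      apply Finset.sum_congr rfl
      intro v _
      rw [← Finset.card_filter]
      -- card {c | base v + c ∈ Bad v} = card (Bad v)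
      apply Finset.card_nbij' (fun c => base v + c) (fun b => b - base v)
      · intro c hc
        simpa using (Finset.mem_filter.mp hc).2
      · intro b hb
        simp only [Finset.mem_filter, Finset.mem_univ, true_and, φc]
        simpa using hb
      · intro c _; simp
      · intro b _; simp
    rw [h1]
    calc ∑ v ∈ S, (Bad v).card ≤ ∑ _v ∈ S, t := Finset.sum_le_sum hBad
      _ = t * S.card := by rw [Finset.sum_const, smul_eq_mul, Nat.mul_comm]
  -- pick the shift minimizing the bad count
  obtain ⟨c, _, hc⟩ := Finset.exists_min_image Finset.univ f
    (Finset.univ_nonempty_iff.mpr ⟨⟨0, hq⟩⟩)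
  refine ⟨φc c, fun j => by rw [hbal c j, hmn], ?_⟩
  have : 2 ^ k * f c ≤ ∑ c' : Fin (2 ^ k), f c' := by
    calc 2 ^ k * f c = ∑ _c' : Fin (2 ^ k), f c := by
          rw [Finset.sum_const, smul_eq_mul, Finset.card_univ, Fintype.card_fin]
      _ ≤ ∑ c' : Fin (2 ^ k), f c' := Finset.sum_le_sum (fun c' hc' => hc c' hc')
  exact this.trans hsum
end
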